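/- arXiv:2505.01826 — 4 statements merged into one kernel-verified Lean document; each statement's English description precedes it below -/
import Mathlib

section
/- Let G and Q be groups, ρ: G → Q a surjective group homomorphism with kernel K, and 𝕜 a field. Let π: Q⁴ → 𝕜ˣ be a normalized 4-cocycle and ω: G³ → 𝕜ˣ a normalized 3-cochain satisfying dω = ρ*π. For g ∈ G and k,l ∈ K define ψ_g(k,l) := ω(kg⁻¹, g, lg⁻¹)·ω(k,l,g⁻¹)·ω(g, kg⁻¹, glg⁻¹)⁻¹·ω(k, g⁻¹, g)⁻¹. Then for all g ∈ G and all k,l,m ∈ K the following identity holds: ψ_g(l,m)·ψ_g(k, lm)·ω(k,l,m) = ω(gkg⁻¹, glg⁻¹, gmg⁻¹)·ψ_g(k,l)·ψ_g(kl, m). -/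
/-- The scalar identity expressing monoidality of the autoequivalence
`q_*` of the twisted crossed product `𝒞 ⋊_ω K` (Lemma 3.2 of the paper): with
`ψ_g(k,l) = ω(kg⁻¹,g,lg⁻¹)·ω(k,l,g⁻¹)·ω(g,kg⁻¹,glg⁻¹)⁻¹·ω(k,g⁻¹,g)⁻¹`, for all
`g ∈ G` and `k,l,m ∈ K = ker ρ` one has
`ψ_g(l,m)·ψ_g(k,lm)·ω(k,l,m) = ω(gkg⁻¹,glg⁻¹,gmg⁻¹)·ψ_g(k,l)·ψ_g(kl,m)`. -/
theorem psi_monoidality_identity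
    {G Q : Type*} [Group G] [Group Q] {𝕜 : Type*} [Field 𝕜]
    (ρ : G →* Q) (hρ : Function.Surjective ρ)
    (π : Q → Q → Q → Q → 𝕜ˣ)
    (hπnorm : ∀ a b c d : Q, (a = 1 ∨ b = 1 ∨ c = 1 ∨ d = 1) → π a b c d = 1)
    (hπcoc : ∀ g₁ g₂ g₃ g₄ g₅ : Q,
      π g₂ g₃ g₄ g₅ * π g₁ (g₂ * g₃) g₄ g₅ * π g₁ g₂ g₃ (g₄ * g₅)
        = π (g₁ * g₂) g₃ g₄ g₅ * π g₁ g₂ (g₃ * g₄) g₅ * π g₁ g₂ g₃ g₄)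
    (ω : G → G → G → 𝕜ˣ)
    (hωnorm : ∀ x y z : G, (x = 1 ∨ y = 1 ∨ z = 1) → ω x y z = 1)
    (hdω : ∀ x y z w : G,
      ω y z w * ω x (y * z) w * ω x y z
        = π (ρ x) (ρ y) (ρ z) (ρ w) * ω (x * y) z w * ω x y (z * w))
    (ψ : G → G → G → 𝕜ˣ)
    (hψ : ∀ g k l : G, ψ g k l
      = ω (k * g⁻¹) g (l * g⁻¹) * ω k l g⁻¹
          * (ω g (k * g⁻¹) (g * l * g⁻¹))⁻¹ * (ω k g⁻¹ g)⁻¹) :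
    ∀ g : G, ∀ k l m : G, k ∈ ρ.ker → l ∈ ρ.ker → m ∈ ρ.ker →
      ψ g l m * ψ g k (l * m) * ω k l m
        = ω (g * k * g⁻¹) (g * l * g⁻¹) (g * m * g⁻¹) * ψ g k l * ψ g (k * l) m := by
  intro g k l m hk hl hm
  rw [MonoidHom.mem_ker] at hk hl hm
  have hm' : ρ (g * m * g⁻¹) = 1 := by simp [hm]
  have hA := hdω k l m g⁻¹
  have hC := hdω (k * g⁻¹) g (l * g⁻¹) (g * m * g⁻¹)
  have hD := hdω g (k * g⁻¹) (g * l * g⁻¹) (g * m * g⁻¹)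
  have hE := hdω k (l * g⁻¹) g (m * g⁻¹)
  have hF := hdω k l g⁻¹ g
  rw [hπnorm _ _ _ _ (Or.inl hk), one_mul] at hA hE hF
  rw [hπnorm _ _ _ _ (Or.inr (Or.inr (Or.inr hm'))), one_mul] at hC hD
  simp only [hψ, mul_assoc, inv_mul_cancel, mul_inv_cancel, mul_one, one_mul,
    inv_mul_cancel_left, mul_inv_cancel_left, hωnorm _ _ 1 (Or.inr (Or.inr rfl))] at *
  have hA' := congrArg (Units.val) hA
  have hC' := congrArg (Units.val) hC
  have hD' := congrArg (Units.val) hD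
  have hE' := congrArg (Units.val) hE
  have hF' := congrArg (Units.val) hF
  rw [Units.ext_iff]
  push_cast at hA' hC' hD' hE' hF' ⊢
  field_simp
  simp only [div_eq_mul_inv, one_div, one_mul, mul_assoc] at *
  refine mul_left_cancel₀ (ω k g⁻¹ g).ne_zero ?_
  linear_combination
      - (((ω (l*g⁻¹) g (m*g⁻¹) : 𝕜ˣ) : 𝕜) * ((ω l m g⁻¹ : 𝕜ˣ) : 𝕜) * ((ω (k*g⁻¹) g (l*(m*g⁻¹)) : 𝕜ˣ) : 𝕜) * ((ω k (l*m) g⁻¹ : 𝕜ˣ) : 𝕜) * ((ω k l m : 𝕜ˣ) : 𝕜) * ((ω g (k*g⁻¹) (g*(l*g⁻¹)) : 𝕜ˣ) : 𝕜) * ((ω k g⁻¹ g : 𝕜ˣ) : 𝕜) * ((ω g (k*(l*g⁻¹)) (g*(m*g⁻¹)) : 𝕜ˣ) : 𝕜)) * hF'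
      + (((ω (l*g⁻¹) g (m*g⁻¹) : 𝕜ˣ) : 𝕜) * ((ω (k*g⁻¹) g (l*(m*g⁻¹)) : 𝕜ˣ) : 𝕜) * ((ω g (k*g⁻¹) (g*(l*g⁻¹)) : 𝕜ˣ) : 𝕜) * ((ω k g⁻¹ g : 𝕜ˣ) : 𝕜) * ((ω g (k*(l*g⁻¹)) (g*(m*g⁻¹)) : 𝕜ˣ) : 𝕜) * ((ω l g⁻¹ g : 𝕜ˣ) : 𝕜) * ((ω k (l*g⁻¹) g : 𝕜ˣ) : 𝕜) * ((ω k l g⁻¹ : 𝕜ˣ) : 𝕜)) * hA'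
      + (((ω (k*g⁻¹) g (l*(m*g⁻¹)) : 𝕜ˣ) : 𝕜) * ((ω g (k*g⁻¹) (g*(l*g⁻¹)) : 𝕜ˣ) : 𝕜) * ((ω k g⁻¹ g : 𝕜ˣ) : 𝕜) * ((ω g (k*(l*g⁻¹)) (g*(m*g⁻¹)) : 𝕜ˣ) : 𝕜) * ((ω l g⁻¹ g : 𝕜ˣ) : 𝕜) * ((ω k l g⁻¹ : 𝕜ˣ) : 𝕜) * ((ω (k*l) m g⁻¹ : 𝕜ˣ) : 𝕜)) * hE'
      - (((ω g (k*g⁻¹) (g*(l*g⁻¹)) : 𝕜ˣ) : 𝕜) * ((ω k g⁻¹ g : 𝕜ˣ) : 𝕜) * ((ω g (k*(l*g⁻¹)) (g*(m*g⁻¹)) : 𝕜ˣ) : 𝕜) * ((ω l g⁻¹ g : 𝕜ˣ) : 𝕜) * ((ω k l g⁻¹ : 𝕜ˣ) : 𝕜) * ((ω (k*l) m g⁻¹ : 𝕜ˣ) : 𝕜) * ((ω (k*(l*g⁻¹)) g (m*g⁻¹) : 𝕜ˣ) : 𝕜)) * hC'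
      + (((ω k g⁻¹ g : 𝕜ˣ) : 𝕜) * ((ω l g⁻¹ g : 𝕜ˣ) : 𝕜) * ((ω k l g⁻¹ : 𝕜ˣ) : 𝕜) * ((ω (k*l) m g⁻¹ : 𝕜ˣ) : 𝕜) * ((ω (k*(l*g⁻¹)) g (m*g⁻¹) : 𝕜ˣ) : 𝕜) * ((ω g (l*g⁻¹) (g*(m*g⁻¹)) : 𝕜ˣ) : 𝕜) * ((ω (k*g⁻¹) g (l*g⁻¹) : 𝕜ˣ) : 𝕜)) * hD'
end

section
/- Let n ≥ 1, let Q be a group, and let G be a group with a surjective homomorphism ρ: G → Q whose kernel A is central in G, together with a group isomorphism φ from A to the additive group ZMod n. Let s: Q → G be a section of ρ with ρ ∘ s = id_Q and s(1) = 1, and let σ̄: Q × Q → ZMod n be given by σ̄(q,r) := φ(s(q)s(r)s(qr)⁻¹). Let c': Q × Q → ZMod n be any 2-cocycle (trivial action, additive notation). Then the pulled-back 4-cochain ρ*(σ̄ ⌣ c') is a coboundary: there exists ω: G³ → ZMod n such that for all x,y,z,w ∈ G, ω(y,z,w) − ω(xy,z,w) + ω(x,yz,w) − ω(x,y,zw)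 + ω(x,y,z) = σ̄(ρ(x),ρ(y))·c'(ρ(z),ρ(w)). -/
/-- Let `G` be a central extension of `Q` by `ZMod n` (the kernel `A`
of `ρ : G → Q` is central and identified with `ZMod n` by an isomorphism `φ`), let `s`
be a normalized section with factor set `σ̄(q,r) = φ(s(q)s(r)s(qr)⁻¹)`, and let `c'` be
any `ZMod n`-valued 2-cocycle on `Q`. Then the pulled-back 4-cochain `ρ*(σ̄ ⌣ c')` is
a coboundary (the recipe at the end of Section 4.2 of the paper). -/
theorem pullback_of_cup_product_along_central_extension_is_coboundary
    (n : ℕ) (hn : 1 ≤ n)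
    {G Q : Type*} [Group G] [Group Q]
    (ρ : G →* Q) (hρ : Function.Surjective ρ)
    (hcentral : ρ.ker ≤ Subgroup.center G)
    (φ : ρ.ker ≃* Multiplicative (ZMod n))
    (s : Q → G) (hs : ∀ q : Q, ρ (s q) = q) (hs1 : s 1 = 1)
    (σbar : Q → Q → ZMod n)
    (hσbar : ∀ q r : Q,
      ((φ.symm (Multiplicative.ofAdd (σbar q r)) : ρ.ker) : G)
        = s q * s r * (s (q * r))⁻¹)
    (c' : Q → Q → ZMod n)
    (hc' : ∀ q r t : Q, c' r t - c' (q * r) t + c' q (r * t) - c' q r = 0) :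
    ∃ ω : G → G → G → ZMod n, ∀ x y z w : G,
      ω y z w - ω (x * y) z w + ω x (y * z) w - ω x y (z * w) + ω x y z
        = σbar (ρ x) (ρ y) * c' (ρ z) (ρ w) := by
  -- the element `k x = x * s(ρ x)⁻¹` lies in the kernel
  have hker : ∀ x : G, x * (s (ρ x))⁻¹ ∈ ρ.ker := by
    intro x
    simp [MonoidHom.mem_ker, hs]
  set k : G → ρ.ker := fun x => ⟨x * (s (ρ x))⁻¹, hker x⟩ with hk
  set f : G → ZMod n := fun x => Multiplicative.toAdd (φ (k x)) with hf
  -- the key cocycle identity for `f`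
  have hfmul : ∀ x y : G, f (x * y) = f x + f y + σbar (ρ x) (ρ y) := by
    intro x y
    have hcomm : ∀ g : G, g * (y * (s (ρ y))⁻¹) = (y * (s (ρ y))⁻¹) * g := by
      intro g
      exact (Subgroup.mem_center_iff.mp (hcentral (hker y)) g)
    have hG : (x * y) * (s (ρ (x * y)))⁻¹
        = (x * (s (ρ x))⁻¹) * (y * (s (ρ y))⁻¹) * (s (ρ x) * s (ρ y) * (s (ρ x * ρ y))⁻¹) := by
      have h1 : (x * (s (ρ x))⁻¹) * (y * (s (ρ y))⁻¹) * (s (ρ x) * s (ρ y) * (s (ρ x * ρ y))⁻¹)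
          = (x * (s (ρ x))⁻¹) * ((y * (s (ρ y))⁻¹) * s (ρ x)) * (s (ρ y) * (s (ρ x * ρ y))⁻¹) := by
        group
      rw [h1, ← hcomm (s (ρ x))]
      rw [map_mul]
      group
    have hker' : k (x * y) = k x * k y * φ.symm (Multiplicative.ofAdd (σbar (ρ x) (ρ y))) := by
      apply Subtype.ext
      push_cast [hk]
      rw [hσbar]
      exact hG
    have := congrArg (fun a => Multiplicative.toAdd (φ a)) hker'
    simpa [hf, map_mul] using this
  refine ⟨fun x y z => -(f x * c' (ρ y) (ρ z)), fun x y z w => ?_⟩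
  have h1 := hfmul x y
  have h2 := hc' (ρ y) (ρ z) (ρ w)
  simp only [map_mul]
  linear_combination (c' (ρ z) (ρ w)) * h1 + f x * h2
end

section
/- Let α be a type, F = FreeGroup α the free group on α, Q a group, ρ: F → Q a surjective group homomorphism with kernel K, and 𝕜 a field. Let π: Q⁴ → 𝕜ˣ be a normalized 4-cocycle. Then there exists a normalized 3-cochain ω: F³ → 𝕜ˣ such that dω = ρ*π, i.e. ω(y,z,w)·ω(x,yz,w)·ω(x,y,z) = π(ρ(x),ρ(y),ρ(z),ρ(w))·ω(xy,z,w)·ω(x,y,zw) for all x,y,z,w ∈ F, and moreover ω(k₁,k₂,k₃) = 1 whenever k₁,k₂,k₃ ∈ K. -/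
set_option linter.unusedSectionVars false
namespace Stmt6

open FreeGroup

variable {α : Type*} {A : Type*} [AddCommGroup A]

private lemma solveA (a b c d e f : A) (h : a + b + c = d + e + f) :
    d = a + b + c - e - f := by rw [h]; abel

private lemma solveB (p q r s t : A) (h : p + q + r = s + t) : s = p + q + r - t := by
  rw [h]; abel

private lemma solveC (x c y d : A) (h : x + c = y + d) : x = y + d - c := by
  rw [← h]; abel

private lemma solveMid (p q r s : A) (h : p + q + r = s) : q = s - p - r := by
  rw [← h]; abel

section Words
variable [DecidableEq α]

lemma reduce_tail {x : α × Bool} {L : List (α × Bool)}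
    (h : reduce (x :: L) = x :: L) : reduce L = L := by
  rcases hL : reduce L with _ | ⟨hd, tl⟩
  · simp only [reduce.cons, hL] at h
    obtain rfl : L = [] := by simpa using h.symm
    simp
  · simp only [reduce.cons, hL] at h
    split_ifs at h with hif
    · exfalso
      have hlen : (reduce L).length ≤ L.length := Red.length_le reduce.red
      rw [hL] at hlen
      rw [h] at hlen
      simp only [List.length_cons] at hlen
      omega
    · simp only [List.cons.injEq, true_and] at h
      exact h

lemma reduce_cons_noncancel {x hd : α × Bool} {L tl : List (α × Bool)}
    (hL : reduce L = L) (hhd : L = hd :: tl) (hne : ¬(x.1 = hd.1 ∧ x.2 = !hd.2)) :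
    reduce (x :: L) = x :: L := by
  subst hhd
  simp only [reduce.cons, hL]
  rw [if_neg hne]

end Words

def lett (ℓ : α × Bool) : FreeGroup α := FreeGroup.mk [ℓ]

lemma lett_true (a : α) : lett (a, true) = of a := rfl

lemma lett_false (a : α) : lett (a, false) = (of a)⁻¹ := by
  have h : of a = mk [(a, true)] := rfl
  rw [lett, h, inv_mk]
  simp [invRev]

lemma lett_inv (a : α) (b : Bool) : lett (a, !b) = (lett (a, b))⁻¹ := by
  cases b
  · simp [lett_true, lett_false]
  · simp [lett_true, lett_false]


section Deg4
variable [DecidableEq α]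
variable (φ : FreeGroup α → FreeGroup α → FreeGroup α → FreeGroup α → A)

/-- `c0 a t = φ(a⁻¹, a, a⁻¹, t)`. -/
def c0 (a : α) (t : FreeGroup α) : A := φ (of a)⁻¹ (of a) (of a)⁻¹ t

/-- base values of the trivializing 3-cochain at single letters -/
def B : α × Bool → FreeGroup α → FreeGroup α → A
  | (a, true), u, v => c0 φ a u + c0 φ a v - c0 φ a (u * v)
  | (a, false), u, v => φ (of a) (of a)⁻¹ u v + c0 φ a (u * v) - c0 φ a u - c0 φ a v

/-- the trivializing 3-cochain, by recursion on the word of the first argument -/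
def Om : List (α × Bool) → FreeGroup α → FreeGroup α → A
  | [], _, _ => 0
  | ℓ :: L, y, z =>
      Om L y z + B φ ℓ (mk L * y) z - B φ ℓ (mk L) (y * z) + B φ ℓ (mk L) y
        - φ (lett ℓ) (mk L) y z

def om (x y z : FreeGroup α) : A := Om φ x.toWord y z

section Lemmas
variable (hn : ∀ x y z w : FreeGroup α, (x = 1 ∨ y = 1 ∨ z = 1 ∨ w = 1) → φ x y z w = 0)
variable (hc : ∀ g₁ g₂ g₃ g₄ g₅ : FreeGroup α,
    φ g₂ g₃ g₄ g₅ + φ g₁ (g₂ * g₃) g₄ g₅ + φ g₁ g₂ g₃ (g₄ * g₅)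
      = φ (g₁ * g₂) g₃ g₄ g₅ + φ g₁ g₂ (g₃ * g₄) g₅ + φ g₁ g₂ g₃ g₄)

include hn

lemma c0_one (a : α) : c0 φ a 1 = 0 := hn _ _ _ _ (Or.inr (Or.inr (Or.inr rfl)))

lemma B_one_left (ℓ : α × Bool) (v : FreeGroup α) : B φ ℓ 1 v = 0 := by
  obtain ⟨a, b⟩ := ℓ
  cases b <;> simp only [B, one_mul]
  · rw [hn _ _ _ _ (Or.inr (Or.inr (Or.inl rfl))), c0_one φ hn]
    abel
  · rw [c0_one φ hn]
    abel

lemma B_one_right (ℓ : α × Bool) (u : FreeGroup α) : B φ ℓ u 1 = 0 := by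
  obtain ⟨a, b⟩ := ℓ
  cases b <;> simp only [B, mul_one]
  · rw [hn _ _ _ _ (Or.inr (Or.inr (Or.inr rfl))), c0_one φ hn]
    abel
  · rw [c0_one φ hn]
    abel

omit hn in
lemma om_one (y z : FreeGroup α) : om φ 1 y z = 0 := rfl

lemma om_lett (ℓ : α × Bool) (y z : FreeGroup α) : om φ (lett ℓ) y z = B φ ℓ y z := by
  have h : (lett ℓ).toWord = [ℓ] := by rw [lett, toWord_mk, reduce_singleton]
  rw [om, h]
  show Om φ [] y z + B φ ℓ (mk [] * y) z - B φ ℓ (mk []) (y * z) + B φ ℓ (mk []) y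
      - φ (lett ℓ) (mk []) y z = B φ ℓ y z
  rw [← one_eq_mk, one_mul]
  rw [B_one_left φ hn, B_one_left φ hn, hn _ _ _ _ (Or.inr (Or.inl rfl))]
  show (0 : A) + B φ ℓ y z - 0 + 0 - 0 = B φ ℓ y z
  abel

omit hn in
lemma om_cons {x : FreeGroup α} {ℓ : α × Bool} {L : List (α × Bool)}
    (h : x.toWord = ℓ :: L) (y z : FreeGroup α) :
    om φ x y z = om φ (mk L) y z + B φ ℓ (mk L * y) z - B φ ℓ (mk L) (y * z)
      + B φ ℓ (mk L) y - φ (lett ℓ) (mk L) y z := by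
  have hred : reduce (ℓ :: L) = ℓ :: L := by rw [← h]; exact reduce_toWord x
  have hL : (mk L).toWord = L := by rw [toWord_mk]; exact reduce_tail hred
  rw [om, h]
  show Om φ (ℓ :: L) y z = _
  rw [Om, om, hL]

def P (x : FreeGroup α) : Prop :=
  ∀ y z w : FreeGroup α,
    om φ (x * y) z w
      = om φ y z w + om φ x (y * z) w - om φ x y (z * w) + om φ x y z - φ x y z w

lemma P_one : P φ 1 := by
  intro y z w
  rw [one_mul, om_one, om_one, om_one, hn _ _ _ _ (Or.inl rfl)]
  abel

omit hn

include hc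

lemma P_mul {u v : FreeGroup α} (hu : P φ u) (hv : P φ v) : P φ (u * v) := by
  intro y z w
  have h1 := hu (v * y) z w
  have h2 := hv y z w
  have h3 := hu v (y * z) w
  have h4 := hu v y (z * w)
  have h5 := hu v y z
  have hphi : φ (u * v) y z w
      = φ v y z w + φ u (v * y) z w + φ u v y (z * w) - φ u v (y * z) w - φ u v y z :=
    solveA _ _ _ _ _ _ (hc u v y z w)
  simp only [mul_assoc] at h1 h2 h3 h4 h5 hphi ⊢
  rw [h1, h2, h3, h4, h5, hphi]
  abel

include hn hc in
lemma Psi (a : α) (b : Bool) (u v : FreeGroup α) :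
    B φ (a, !b) u v + B φ (a, b) ((lett (a, b))⁻¹ * u) v
      = φ (lett (a, b)) (lett (a, b))⁻¹ u v
        + B φ (a, b) ((lett (a, b))⁻¹) (u * v) - B φ (a, b) ((lett (a, b))⁻¹) u := by
  cases b
  · -- b = false
    simp only [Bool.not_false, lett_true, lett_false, inv_inv, B, c0]
    have h := hc (of a)⁻¹ (of a) (of a)⁻¹ (of a * u) v
    rw [mul_inv_cancel, inv_mul_cancel, inv_mul_cancel_left,
      hn _ _ _ _ (Or.inr (Or.inl rfl)), hn _ _ _ _ (Or.inl rfl), add_zero, zero_add] at h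
    have i1 : φ (of a) (of a)⁻¹ (of a * u) v
        = φ (of a)⁻¹ (of a) u v + φ (of a)⁻¹ (of a) (of a)⁻¹ (of a * u)
          - φ (of a)⁻¹ (of a) (of a)⁻¹ (of a * u * v) := solveC _ _ _ _ h
    have h2 := hc (of a)⁻¹ (of a) (of a)⁻¹ (of a) (u * v)
    rw [mul_inv_cancel, inv_mul_cancel, hn _ _ _ _ (Or.inr (Or.inl rfl)),
      hn _ _ _ _ (Or.inl rfl), hn _ _ _ _ (Or.inr (Or.inr (Or.inl rfl))),
      add_zero, zero_add, zero_add] at h2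
    have h3 := hc (of a)⁻¹ (of a) (of a)⁻¹ (of a) u
    rw [mul_inv_cancel, inv_mul_cancel, hn _ _ _ _ (Or.inr (Or.inl rfl)),
      hn _ _ _ _ (Or.inl rfl), hn _ _ _ _ (Or.inr (Or.inr (Or.inl rfl))),
      add_zero, zero_add, zero_add] at h3
    have i2 : φ (of a) (of a)⁻¹ (of a) (u * v)
        = φ (of a)⁻¹ (of a) (of a)⁻¹ (of a) - φ (of a)⁻¹ (of a) (of a)⁻¹ (of a * (u * v)) :=
      eq_sub_of_add_eq h2
    have i3 : φ (of a) (of a)⁻¹ (of a) u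
        = φ (of a)⁻¹ (of a) (of a)⁻¹ (of a) - φ (of a)⁻¹ (of a) (of a)⁻¹ (of a * u) :=
      eq_sub_of_add_eq h3
    simp only [mul_assoc] at i1 i2 i3 ⊢
    rw [i1, i2, i3]
    abel
  · -- b = true
    simp only [Bool.not_true, lett_true, lett_false, B, c0]
    simp only [mul_assoc]
    abel

include hn hc in
lemma P_lett (ℓ : α × Bool) : P φ (lett ℓ) := by
  obtain ⟨a, b⟩ := ℓ
  intro y z w
  rcases hy : y.toWord with _ | ⟨⟨a', b'⟩, L'⟩
  · obtain rfl : y = 1 := toWord_eq_nil_iff.mp hy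
    rw [mul_one, om_one, om_lett φ hn, om_lett φ hn, om_lett φ hn, om_lett φ hn, one_mul,
      B_one_left φ hn, B_one_left φ hn, hn _ _ _ _ (Or.inr (Or.inl rfl))]
    abel
  · by_cases hb : (a', b') = (a, !b)
    · -- cancellation
      rw [hb] at hy
      have hred : reduce ((a, !b) :: L') = (a, !b) :: L' := by rw [← hy]; exact reduce_toWord y
      have hL' : (mk L').toWord = L' := by rw [toWord_mk]; exact reduce_tail hred
      have hyy : y = (lett (a, b))⁻¹ * mk L' := by
        rw [← lett_inv, ← mk_toWord (x := y), hy, lett, mul_mk, List.singleton_append]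
      set y' := mk L' with hy'def
      have hEy : om φ y z w = om φ y' z w + B φ (a, !b) (y' * z) w - B φ (a, !b) y' (z * w)
          + B φ (a, !b) y' z - φ (lett (a, !b)) y' z w := om_cons φ hy z w
      rw [lett_inv] at hEy
      have h1 : lett (a, b) * y = y' := by rw [hyy, mul_inv_cancel_left]
      have psi1 := eq_sub_of_add_eq' (Psi φ hn hc a b (y' * z) w)
      have psi2 := eq_sub_of_add_eq' (Psi φ hn hc a b y' (z * w))
      have psi3 := eq_sub_of_add_eq' (Psi φ hn hc a b y' z)
      have hco := hc (lett (a, b)) ((lett (a, b))⁻¹) y' z w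
      rw [mul_inv_cancel, hn _ _ _ _ (Or.inl rfl), zero_add] at hco
      have hphi := solveMid _ _ _ _ hco
      rw [h1, hEy, om_lett φ hn, om_lett φ hn, om_lett φ hn, hyy]
      simp only [mul_assoc] at psi1 psi2 psi3 hphi ⊢
      rw [psi1, psi2, psi3, hphi]
      abel
    · -- no cancellation
      have hne : ¬(((a, b) : α × Bool).1 = ((a', b') : α × Bool).1
          ∧ ((a, b) : α × Bool).2 = !((a', b') : α × Bool).2) := by
        rintro ⟨h1, h2⟩
        apply hb
        simp only at h1 h2
        subst h1
        rw [h2, Bool.not_not]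
      have htw : (lett (a, b) * y).toWord = (a, b) :: y.toWord := by
        have h1 : lett (a, b) * y = mk ((a, b) :: y.toWord) := by
          conv_lhs => rw [← mk_toWord (x := y)]
          rw [lett, mul_mk, List.singleton_append]
        rw [h1, toWord_mk]
        exact reduce_cons_noncancel (reduce_toWord y) hy hne
      rw [om_cons φ htw z w, mk_toWord, om_lett φ hn, om_lett φ hn, om_lett φ hn]

include hn hc in
lemma P_all (x : FreeGroup α) : P φ x := by
  suffices H : ∀ (n : ℕ) (x : FreeGroup α), x.toWord.length ≤ n → P φ x from
    H x.toWord.length x le_rfl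
  intro n
  induction n with
  | zero =>
    intro x hx
    obtain rfl : x = 1 := toWord_eq_nil_iff.mp (List.length_eq_zero_iff.mp (Nat.le_zero.mp hx))
    exact P_one φ hn
  | succ n ih =>
    intro x hx
    rcases hy : x.toWord with _ | ⟨ℓ, L⟩
    · obtain rfl : x = 1 := toWord_eq_nil_iff.mp hy
      exact P_one φ hn
    · have hred : reduce (ℓ :: L) = ℓ :: L := by rw [← hy]; exact reduce_toWord x
      have hL : (mk L).toWord = L := by rw [toWord_mk]; exact reduce_tail hred
      have hx' : x = lett ℓ * mk L := by
        rw [← mk_toWord (x := x), hy, lett, mul_mk, List.singleton_append]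
      have hlen : (mk L).toWord.length ≤ n := by
        rw [hL]
        rw [hy] at hx
        simp only [List.length_cons] at hx
        omega
      rw [hx']
      exact P_mul φ hc (P_lett φ hn hc ℓ) (ih _ hlen)

omit hc

include hn in
lemma Om_mid_one (L : List (α × Bool)) (z : FreeGroup α) : Om φ L 1 z = 0 := by
  induction L with
  | nil => rfl
  | cons ℓ L ih =>
    show Om φ L 1 z + B φ ℓ (mk L * 1) z - B φ ℓ (mk L) (1 * z) + B φ ℓ (mk L) 1
        - φ (lett ℓ) (mk L) 1 z = 0
    rw [mul_one, one_mul, ih, B_one_right φ hn, hn _ _ _ _ (Or.inr (Or.inr (Or.inl rfl)))]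
    abel

include hn in
lemma Om_right_one (L : List (α × Bool)) (y : FreeGroup α) : Om φ L y 1 = 0 := by
  induction L with
  | nil => rfl
  | cons ℓ L ih =>
    show Om φ L y 1 + B φ ℓ (mk L * y) 1 - B φ ℓ (mk L) (y * 1) + B φ ℓ (mk L) y
        - φ (lett ℓ) (mk L) y 1 = 0
    rw [mul_one, ih, B_one_right φ hn, hn _ _ _ _ (Or.inr (Or.inr (Or.inr rfl)))]
    abel

include hn in
lemma om_mid_one (x z : FreeGroup α) : om φ x 1 z = 0 := Om_mid_one φ hn _ _

include hn in
lemma om_right_one (x y : FreeGroup α) : om φ x y 1 = 0 := Om_right_one φ hn _ _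

end Lemmas
end Deg4


section Deg3
variable {β : Type*} [DecidableEq β]
variable (θ : FreeGroup β → FreeGroup β → FreeGroup β → A)

def B3 : β × Bool → FreeGroup β → A
  | (_, true), _ => 0
  | (a, false), u => θ (of a) (of a)⁻¹ u

def Om3 : List (β × Bool) → FreeGroup β → A
  | [], _ => 0
  | ℓ :: L, y => Om3 L y + B3 θ ℓ (mk L * y) - B3 θ ℓ (mk L) - θ (lett ℓ) (mk L) y

def om3 (x y : FreeGroup β) : A := Om3 θ x.toWord y

section Lemmas3
variable (hn : ∀ x y z : FreeGroup β, (x = 1 ∨ y = 1 ∨ z = 1) → θ x y z = 0)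
variable (hc : ∀ g₁ g₂ g₃ g₄ : FreeGroup β,
    θ g₂ g₃ g₄ + θ g₁ (g₂ * g₃) g₄ + θ g₁ g₂ g₃ = θ (g₁ * g₂) g₃ g₄ + θ g₁ g₂ (g₃ * g₄))

include hn

lemma B3_one (ℓ : β × Bool) : B3 θ ℓ 1 = 0 := by
  obtain ⟨a, b⟩ := ℓ
  cases b
  · exact hn _ _ _ (Or.inr (Or.inr rfl))
  · rfl

omit hn in
lemma om3_one (y : FreeGroup β) : om3 θ 1 y = 0 := rfl

lemma om3_lett (ℓ : β × Bool) (y : FreeGroup β) : om3 θ (lett ℓ) y = B3 θ ℓ y := by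
  have h : (lett ℓ).toWord = [ℓ] := by rw [lett, toWord_mk, reduce_singleton]
  rw [om3, h]
  show Om3 θ [] y + B3 θ ℓ (mk [] * y) - B3 θ ℓ (mk []) - θ (lett ℓ) (mk []) y = B3 θ ℓ y
  rw [← one_eq_mk, one_mul, B3_one θ hn, hn _ _ _ (Or.inr (Or.inl rfl))]
  show (0 : A) + B3 θ ℓ y - 0 - 0 = B3 θ ℓ y
  abel

omit hn in
lemma om3_cons {x : FreeGroup β} {ℓ : β × Bool} {L : List (β × Bool)}
    (h : x.toWord = ℓ :: L) (y : FreeGroup β) :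
    om3 θ x y = om3 θ (mk L) y + B3 θ ℓ (mk L * y) - B3 θ ℓ (mk L) - θ (lett ℓ) (mk L) y := by
  have hred : reduce (ℓ :: L) = ℓ :: L := by rw [← h]; exact reduce_toWord x
  have hL : (mk L).toWord = L := by rw [toWord_mk]; exact reduce_tail hred
  rw [om3, h]
  show Om3 θ (ℓ :: L) y = _
  rw [Om3, om3, hL]

def P3 (x : FreeGroup β) : Prop :=
  ∀ y z : FreeGroup β,
    om3 θ (x * y) z = om3 θ y z + om3 θ x (y * z) - om3 θ x y - θ x y z

lemma P3_one : P3 θ 1 := by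
  intro y z
  rw [one_mul, om3_one, om3_one, hn _ _ _ (Or.inl rfl)]
  abel

omit hn in
include hc in
lemma P3_mul {u v : FreeGroup β} (hu : P3 θ u) (hv : P3 θ v) : P3 θ (u * v) := by
  intro y z
  have h1 := hu (v * y) z
  have h2 := hv y z
  have h3 := hu v (y * z)
  have h4 := hu v y
  have hphi : θ (u * v) y z = θ v y z + θ u (v * y) z + θ u v y - θ u v (y * z) :=
    solveB _ _ _ _ _ (hc u v y z)
  simp only [mul_assoc] at h1 h2 h3 h4 hphi ⊢
  rw [h1, h2, h3, h4, hphi]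
  abel

include hc in
lemma Psi3 (a : β) (b : Bool) (u : FreeGroup β) :
    B3 θ (a, !b) u + B3 θ (a, b) ((lett (a, b))⁻¹ * u)
      = θ (lett (a, b)) (lett (a, b))⁻¹ u + B3 θ (a, b) ((lett (a, b))⁻¹) := by
  cases b
  · -- b = false
    simp only [Bool.not_false, lett_false, inv_inv, B3]
    have h := hc (of a)⁻¹ (of a) (of a)⁻¹ (of a * u)
    rw [mul_inv_cancel, inv_mul_cancel, inv_mul_cancel_left,
      hn _ _ _ (Or.inr (Or.inl rfl)), hn _ _ _ (Or.inl rfl), add_zero, zero_add] at h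
    -- h : θ a a⁻¹ (a*u) + θ a⁻¹ a a⁻¹ = θ a⁻¹ a u
    have h2 := hc (of a)⁻¹ (of a) (of a)⁻¹ (of a)
    rw [mul_inv_cancel, inv_mul_cancel, hn _ _ _ (Or.inr (Or.inl rfl)),
      hn _ _ _ (Or.inl rfl), hn _ _ _ (Or.inr (Or.inr rfl)), add_zero, zero_add] at h2
    -- h2 : θ a a⁻¹ a + θ a⁻¹ a a⁻¹ = 0
    rw [eq_sub_of_add_eq h, eq_sub_of_add_eq h2]
    abel
  · simp only [Bool.not_true, lett_true, B3]

include hc in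
lemma P3_lett (ℓ : β × Bool) : P3 θ (lett ℓ) := by
  obtain ⟨a, b⟩ := ℓ
  intro y z
  rcases hy : y.toWord with _ | ⟨⟨a', b'⟩, L'⟩
  · obtain rfl : y = 1 := toWord_eq_nil_iff.mp hy
    rw [mul_one, om3_one, om3_lett θ hn, om3_lett θ hn, om3_lett θ hn, one_mul,
      B3_one θ hn, hn _ _ _ (Or.inr (Or.inl rfl))]
    abel
  · by_cases hb : (a', b') = (a, !b)
    · rw [hb] at hy
      have hred : reduce ((a, !b) :: L') = (a, !b) :: L' := by rw [← hy]; exact reduce_toWord y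
      have hL' : (mk L').toWord = L' := by rw [toWord_mk]; exact reduce_tail hred
      have hyy : y = (lett (a, b))⁻¹ * mk L' := by
        rw [← lett_inv, ← mk_toWord (x := y), hy, lett, mul_mk, List.singleton_append]
      set y' := mk L' with hy'def
      have hEy : om3 θ y z = om3 θ y' z + B3 θ (a, !b) (y' * z) - B3 θ (a, !b) y'
          - θ (lett (a, !b)) y' z := om3_cons θ hy z
      rw [lett_inv] at hEy
      have h1 : lett (a, b) * y = y' := by rw [hyy, mul_inv_cancel_left]
      have psi1 := eq_sub_of_add_eq' (Psi3 θ hn hc a b (y' * z))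
      have psi2 := eq_sub_of_add_eq' (Psi3 θ hn hc a b y')
      have hco := hc (lett (a, b)) ((lett (a, b))⁻¹) y' z
      rw [mul_inv_cancel, hn _ _ _ (Or.inl rfl), zero_add] at hco
      have hphi := solveMid _ _ _ _ hco
      rw [h1, hEy, om3_lett θ hn, om3_lett θ hn, hyy]
      simp only [mul_assoc] at psi1 psi2 hphi ⊢
      rw [psi1, psi2, hphi]
      abel
    · have hne : ¬(((a, b) : β × Bool).1 = ((a', b') : β × Bool).1
          ∧ ((a, b) : β × Bool).2 = !((a', b') : β × Bool).2) := by
        rintro ⟨h1, h2⟩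
        apply hb
        simp only at h1 h2
        subst h1
        rw [h2, Bool.not_not]
      have htw : (lett (a, b) * y).toWord = (a, b) :: y.toWord := by
        have h1 : lett (a, b) * y = mk ((a, b) :: y.toWord) := by
          conv_lhs => rw [← mk_toWord (x := y)]
          rw [lett, mul_mk, List.singleton_append]
        rw [h1, toWord_mk]
        exact reduce_cons_noncancel (reduce_toWord y) hy hne
      rw [om3_cons θ htw z, mk_toWord, om3_lett θ hn, om3_lett θ hn]

include hc in
lemma P3_all (x : FreeGroup β) : P3 θ x := by
  suffices H : ∀ (n : ℕ) (x : FreeGroup β), x.toWord.length ≤ n → P3 θ x from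
    H x.toWord.length x le_rfl
  intro n
  induction n with
  | zero =>
    intro x hx
    obtain rfl : x = 1 := toWord_eq_nil_iff.mp (List.length_eq_zero_iff.mp (Nat.le_zero.mp hx))
    exact P3_one θ hn
  | succ n ih =>
    intro x hx
    rcases hy : x.toWord with _ | ⟨ℓ, L⟩
    · obtain rfl : x = 1 := toWord_eq_nil_iff.mp hy
      exact P3_one θ hn
    · have hred : reduce (ℓ :: L) = ℓ :: L := by rw [← hy]; exact reduce_toWord x
      have hL : (mk L).toWord = L := by rw [toWord_mk]; exact reduce_tail hred
      have hx' : x = lett ℓ * mk L := by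
        rw [← mk_toWord (x := x), hy, lett, mul_mk, List.singleton_append]
      have hlen : (mk L).toWord.length ≤ n := by
        rw [hL]
        rw [hy] at hx
        simp only [List.length_cons] at hx
        omega
      rw [hx']
      exact P3_mul θ hc (P3_lett θ hn hc ℓ) (ih _ hlen)

lemma Om3_right_one (L : List (β × Bool)) : Om3 θ L 1 = 0 := by
  induction L with
  | nil => rfl
  | cons ℓ L ih =>
    show Om3 θ L 1 + B3 θ ℓ (mk L * 1) - B3 θ ℓ (mk L) - θ (lett ℓ) (mk L) 1 = 0
    rw [mul_one, ih, hn _ _ _ (Or.inr (Or.inr rfl))]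
    abel

lemma om3_right_one (x : FreeGroup β) : om3 θ x 1 = 0 := Om3_right_one θ hn _

end Lemmas3
end Deg3

end Stmt6

/-- For a surjection `ρ` from a free group `F = FreeGroup α` onto `Q`
with kernel `K` and a normalized 4-cocycle `π` on `Q`, there is a normalized 3-cochain
`ω` on `F` with `dω = ρ*π` whose restriction to `K` is identically `1` (the
cohomological input to Corollary 4.1 of the paper). -/
theorem free_group_trivialization_vanishing_on_kernel
    {α : Type*} {Q : Type*} [Group Q] {𝕜 : Type*} [Field 𝕜]
    (ρ : FreeGroup α →* Q) (hρ : Function.Surjective ρ)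
    (π : Q → Q → Q → Q → 𝕜ˣ)
    (hπnorm : ∀ a b c d : Q, (a = 1 ∨ b = 1 ∨ c = 1 ∨ d = 1) → π a b c d = 1)
    (hπcoc : ∀ g₁ g₂ g₃ g₄ g₅ : Q,
      π g₂ g₃ g₄ g₅ * π g₁ (g₂ * g₃) g₄ g₅ * π g₁ g₂ g₃ (g₄ * g₅)
        = π (g₁ * g₂) g₃ g₄ g₅ * π g₁ g₂ (g₃ * g₄) g₅ * π g₁ g₂ g₃ g₄) :
    ∃ ω : FreeGroup α → FreeGroup α → FreeGroup α → 𝕜ˣ,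
      (∀ x y z : FreeGroup α, (x = 1 ∨ y = 1 ∨ z = 1) → ω x y z = 1) ∧
      (∀ x y z w : FreeGroup α,
        ω y z w * ω x (y * z) w * ω x y z
          = π (ρ x) (ρ y) (ρ z) (ρ w) * ω (x * y) z w * ω x y (z * w)) ∧
      (∀ k₁ k₂ k₃ : FreeGroup α, k₁ ∈ ρ.ker → k₂ ∈ ρ.ker → k₃ ∈ ρ.ker →
        ω k₁ k₂ k₃ = 1) := by
  classical
  set φ : FreeGroup α → FreeGroup α → FreeGroup α → FreeGroup α → Additive 𝕜ˣ :=
    fun x y z w => Additive.ofMul (π (ρ x) (ρ y) (ρ z) (ρ w)) with hφdef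
  have hnK : ∀ x y z w : FreeGroup α,
      (ρ x = 1 ∨ ρ y = 1 ∨ ρ z = 1 ∨ ρ w = 1) → φ x y z w = 0 := by
    intro x y z w h
    have h1 : π (ρ x) (ρ y) (ρ z) (ρ w) = 1 := hπnorm _ _ _ _ h
    simp [hφdef, h1]
  have hn : ∀ x y z w : FreeGroup α, (x = 1 ∨ y = 1 ∨ z = 1 ∨ w = 1) → φ x y z w = 0 := by
    intro x y z w h
    apply hnK
    rcases h with rfl | rfl | rfl | rfl
    · exact Or.inl (map_one ρ)
    · exact Or.inr (Or.inl (map_one ρ))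
    · exact Or.inr (Or.inr (Or.inl (map_one ρ)))
    · exact Or.inr (Or.inr (Or.inr (map_one ρ)))
  have hc : ∀ g₁ g₂ g₃ g₄ g₅ : FreeGroup α,
      φ g₂ g₃ g₄ g₅ + φ g₁ (g₂ * g₃) g₄ g₅ + φ g₁ g₂ g₃ (g₄ * g₅)
        = φ (g₁ * g₂) g₃ g₄ g₅ + φ g₁ g₂ (g₃ * g₄) g₅ + φ g₁ g₂ g₃ g₄ := by
    intro g₁ g₂ g₃ g₄ g₅
    have h1 := hπcoc (ρ g₁) (ρ g₂) (ρ g₃) (ρ g₄) (ρ g₅)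
    simp only [hφdef, map_mul, ← ofMul_mul]
    exact congrArg Additive.ofMul h1
  have hP := Stmt6.P_all φ hn hc
  -- the kernel is a free group (Nielsen–Schreier)
  let e : ↥ρ.ker ≃* FreeGroup (IsFreeGroup.Generators ↥ρ.ker) :=
    IsFreeGroup.toFreeGroup ↥ρ.ker
  set θ : FreeGroup (IsFreeGroup.Generators ↥ρ.ker) →
      FreeGroup (IsFreeGroup.Generators ↥ρ.ker) →
      FreeGroup (IsFreeGroup.Generators ↥ρ.ker) → Additive 𝕜ˣ :=
    fun s t u => Stmt6.om φ ↑(e.symm s) ↑(e.symm t) ↑(e.symm u) with hθdef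
  have hmem : ∀ s, (↑(e.symm s) : FreeGroup α) ∈ ρ.ker := fun s => (e.symm s).2
  have hn3 : ∀ s t u, (s = 1 ∨ t = 1 ∨ u = 1) → θ s t u = 0 := by
    intro s t u h
    rcases h with rfl | rfl | rfl
    · simp only [hθdef, map_one, OneMemClass.coe_one]
      exact Stmt6.om_one φ _ _
    · simp only [hθdef, map_one, OneMemClass.coe_one]
      exact Stmt6.om_mid_one φ hn _ _
    · simp only [hθdef, map_one, OneMemClass.coe_one]
      exact Stmt6.om_right_one φ hn _ _
  have hc3 : ∀ g₁ g₂ g₃ g₄, θ g₂ g₃ g₄ + θ g₁ (g₂ * g₃) g₄ + θ g₁ g₂ g₃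
      = θ (g₁ * g₂) g₃ g₄ + θ g₁ g₂ (g₃ * g₄) := by
    intro g₁ g₂ g₃ g₄
    have hp := hP (↑(e.symm g₁) : FreeGroup α) ↑(e.symm g₂) ↑(e.symm g₃) ↑(e.symm g₄)
    rw [hnK _ _ _ _ (Or.inl (MonoidHom.mem_ker.mp (hmem g₁)))] at hp
    simp only [hθdef, map_mul, Subgroup.coe_mul]
    rw [hp]
    abel
  have hP3 := Stmt6.P3_all θ hn3 hc3
  set τ : FreeGroup α → FreeGroup α → Additive 𝕜ˣ := fun x y =>
    if h : x ∈ ρ.ker ∧ y ∈ ρ.ker then Stmt6.om3 θ (e ⟨x, h.1⟩) (e ⟨y, h.2⟩) else 0 with hτdef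
  have hτK : ∀ x y (hx : x ∈ ρ.ker) (hy : y ∈ ρ.ker),
      τ x y = Stmt6.om3 θ (e ⟨x, hx⟩) (e ⟨y, hy⟩) := by
    intro x y hx hy
    simp only [hτdef]
    rw [dif_pos (show x ∈ ρ.ker ∧ y ∈ ρ.ker from ⟨hx, hy⟩)]
  have hτ1l : ∀ y, τ 1 y = 0 := by
    intro y
    by_cases h : y ∈ ρ.ker
    · rw [hτK 1 y (one_mem _) h]
      have h1 : (⟨1, one_mem _⟩ : ↥ρ.ker) = 1 := rfl
      rw [h1, map_one]
      exact Stmt6.om3_one θ _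
    · simp only [hτdef]
      rw [dif_neg (fun hh => h hh.2)]
  have hτ1r : ∀ x, τ x 1 = 0 := by
    intro x
    by_cases h : x ∈ ρ.ker
    · rw [hτK x 1 h (one_mem _)]
      have h1 : (⟨1, one_mem _⟩ : ↥ρ.ker) = 1 := rfl
      rw [h1, map_one]
      exact Stmt6.om3_right_one θ hn3 _
    · simp only [hτdef]
      rw [dif_neg (fun hh => h hh.1)]
  set W : FreeGroup α → FreeGroup α → FreeGroup α → Additive 𝕜ˣ := fun x y z =>
    Stmt6.om φ x y z - (τ y z - τ (x * y) z + τ x (y * z) - τ x y) with hWdef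
  refine ⟨fun x y z => Additive.toMul (W x y z), ?_, ?_, ?_⟩
  · intro x y z h
    have hW0 : W x y z = 0 := by
      rcases h with rfl | rfl | rfl
      · simp only [hWdef]
        rw [Stmt6.om_one φ, one_mul, hτ1l, hτ1l]
        abel
      · simp only [hWdef]
        rw [Stmt6.om_mid_one φ hn, one_mul, mul_one, hτ1l, hτ1r]
        abel
      · simp only [hWdef]
        rw [Stmt6.om_right_one φ hn, mul_one, hτ1r, hτ1r]
        abel
    show Additive.toMul (W x y z) = 1
    rw [hW0]
    rfl
  · intro x y z w
    have hp := hP x y z w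
    have key : W y z w + W x (y * z) w + W x y z
        = φ x y z w + W (x * y) z w + W x y (z * w) := by
      simp only [hWdef]
      rw [hp]
      simp only [mul_assoc]
      abel
    have h2 := congrArg Additive.toMul key
    simpa only [toMul_add, hφdef, toMul_ofMul] using h2
  · intro k₁ k₂ k₃ h1 h2 h3
    have hp3 := hP3 (e ⟨k₁, h1⟩) (e ⟨k₂, h2⟩)
    have hp3' := hp3 (e ⟨k₃, h3⟩)
    have hθval : θ (e ⟨k₁, h1⟩) (e ⟨k₂, h2⟩) (e ⟨k₃, h3⟩) = Stmt6.om φ k₁ k₂ k₃ := by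
      simp only [hθdef, MulEquiv.symm_apply_apply]
    have ht12 : τ (k₁ * k₂) k₃
        = Stmt6.om3 θ (e ⟨k₁, h1⟩ * e ⟨k₂, h2⟩) (e ⟨k₃, h3⟩) := by
      rw [hτK _ _ (mul_mem h1 h2) h3, ← map_mul]
      congr 2
    have ht23 : τ k₁ (k₂ * k₃)
        = Stmt6.om3 θ (e ⟨k₁, h1⟩) (e ⟨k₂, h2⟩ * e ⟨k₃, h3⟩) := by
      rw [hτK _ _ h1 (mul_mem h2 h3), ← map_mul]
      congr 2
    have hW0 : W k₁ k₂ k₃ = 0 := by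
      simp only [hWdef]
      rw [hτK k₂ k₃ h2 h3, hτK k₁ k₂ h1 h2, ht12, ht23, ← hθval, hp3']
      abel
    show Additive.toMul (W k₁ k₂ k₃) = 1
    rw [hW0]
    rfl
end

section
/- Let Q be a finite group and p a prime. Consider the trivial Q-representations on the additive groups ZMod p and Additive ℂˣ (ℤ-modules), and the coefficient homomorphism ZMod p → Additive ℂˣ sending the residue class of 1 to the primitive p-th root of unity exp(2πi/p) (an injective homomorphism onto the p-th roots of unity). Assume the third group cohomology H³(Q, ℂˣ) (trivial action) is finite and its cardinality is coprime to p. Then the induced map on fourth group cohomology H⁴(Q, ZMod p) → H⁴(Q, ℂˣ) is injective. -/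
open groupCohomology

open CategoryTheory Limits in
section
open CategoryTheory Limits

section AuxGeneral
variable {R : Type*} [Ring R]

lemma Aux.pi_surjective (S : ShortComplex (ModuleCat R)) :
    Function.Surjective S.homologyπ := by
  rw [← ModuleCat.epi_iff_surjective]
  infer_instance

lemma Aux.pi_eq_zero_iff (S : ShortComplex (ModuleCat R)) (x : S.cycles) :
    S.homologyπ x = 0 ↔ ∃ y, S.toCycles y = x := by
  have hcyc : Function.Injective S.moduleCatCyclesIso.hom :=
    (ModuleCat.mono_iff_injective S.moduleCatCyclesIso.hom).1 inferInstance
  have hhom : Function.Injective S.moduleCatHomologyIso.hom :=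
    (ModuleCat.mono_iff_injective S.moduleCatHomologyIso.hom).1 inferInstance
  have key : S.moduleCatHomologyIso.hom (S.homologyπ x)
      = S.moduleCatLeftHomologyData.π (S.moduleCatCyclesIso.hom x) :=
    ShortComplex.π_moduleCatCyclesIso_hom_apply S x
  constructor
  · intro h
    rw [h, map_zero] at key
    have h3 : S.moduleCatCyclesIso.hom x ∈ LinearMap.range S.moduleCatToCycles :=
      (Submodule.Quotient.mk_eq_zero _).1 key.symm
    obtain ⟨y, hy⟩ := h3
    refine ⟨y, hcyc ?_⟩
    rw [← hy]
    exact ShortComplex.toCycles_moduleCatCyclesIso_hom_apply S y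
  · rintro ⟨y, rfl⟩
    apply hhom
    rw [map_zero, key]
    have h5 : S.moduleCatCyclesIso.hom (S.toCycles y) = S.moduleCatToCycles y :=
      ShortComplex.toCycles_moduleCatCyclesIso_hom_apply S y
    rw [h5]
    exact (Submodule.Quotient.mk_eq_zero _).2 ⟨y, rfl⟩

lemma Aux.toCycles_iCycles_apply (S : ShortComplex (ModuleCat R)) (y : S.X₁) :
    S.iCycles (S.toCycles y) = S.f y := by
  have := CategoryTheory.ConcreteCategory.congr_hom S.toCycles_i y
  exact this

lemma Aux.card_smul_mem_range (S : ShortComplex (ModuleCat R)) [Finite S.homology]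
    (x : S.X₂) (hx : S.g x = 0) :
    ∃ y, S.f y = Nat.card S.homology • x := by
  set c : S.cycles := S.moduleCatCyclesIso.inv ⟨x, hx⟩ with hc
  have h0 : Nat.card S.homology • S.homologyπ c = 0 := card_nsmul_eq_zero'
  rw [← map_nsmul] at h0
  obtain ⟨y, hy⟩ := (Aux.pi_eq_zero_iff S _).1 h0
  refine ⟨y, ?_⟩
  have h1 := congrArg S.iCycles hy
  rw [Aux.toCycles_iCycles_apply, map_nsmul] at h1
  have h2 : S.iCycles c = x := by
    have := ShortComplex.moduleCatCyclesIso_inv_iCycles_apply S (⟨x, hx⟩ : LinearMap.ker S.g.hom)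
    exact this
  rw [h1, h2]

lemma Aux.cyclesMap_iCycles_apply {S₁ S₂ : ShortComplex (ModuleCat R)} (φ : S₁ ⟶ S₂)
    (x : S₁.cycles) :
    S₂.iCycles (ShortComplex.cyclesMap φ x) = φ.τ₂ (S₁.iCycles x) := by
  have := CategoryTheory.ConcreteCategory.congr_hom (ShortComplex.cyclesMap_i φ) x
  exact this

lemma Aux.iCycles_g_apply (S : ShortComplex (ModuleCat R)) (x : S.cycles) :
    S.g (S.iCycles x) = 0 := by
  have := CategoryTheory.ConcreteCategory.congr_hom S.iCycles_g x
  exact this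

lemma Aux.homologyMap_injective {S₁ S₂ : ShortComplex (ModuleCat R)} (φ : S₁ ⟶ S₂)
    (h : ∀ x : S₁.X₂, S₁.g x = 0 → (∃ y, S₂.f y = φ.τ₂ x) → ∃ z, S₁.f z = x) :
    Function.Injective (ShortComplex.homologyMap φ) := by
  rw [injective_iff_map_eq_zero]
  intro a ha
  obtain ⟨x, rfl⟩ := Aux.pi_surjective S₁ a
  have hnat : ShortComplex.homologyMap φ (S₁.homologyπ x)
      = S₂.homologyπ (ShortComplex.cyclesMap φ x) := by
    have := CategoryTheory.ConcreteCategory.congr_hom (ShortComplex.homologyπ_naturality φ) x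
    exact this
  rw [hnat] at ha
  obtain ⟨y, hy⟩ := (Aux.pi_eq_zero_iff S₂ _).1 ha
  have hy2 : S₂.f y = φ.τ₂ (S₁.iCycles x) := by
    have := congrArg S₂.iCycles hy
    rw [Aux.toCycles_iCycles_apply, Aux.cyclesMap_iCycles_apply] at this
    exact this
  obtain ⟨z, hz⟩ := h (S₁.iCycles x) (Aux.iCycles_g_apply S₁ x) ⟨y, hy2⟩
  have hx : S₁.toCycles z = x := by
    have hmono : Function.Injective S₁.iCycles :=
      (ModuleCat.mono_iff_injective _).1 inferInstance
    apply hmono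
    rw [Aux.toCycles_iCycles_apply, hz]
  rw [← hx, (Aux.pi_eq_zero_iff S₁ _).2 ⟨z, rfl⟩]

lemma Aux.d_range_congr (K : HomologicalComplex (ModuleCat R) (ComplexShape.up ℕ))
    {i i' j : ℕ} (h : i = i') (v : K.X j) :
    (∃ y : K.X i, K.d i j y = v) ↔ (∃ y' : K.X i', K.d i' j y' = v) := by
  subst h; rfl

end AuxGeneral

end

/-- The primitive `p`-th root of unity `exp(2πi/p)` as a unit of `ℂ`. -/
noncomputable def primitiveRootUnit (p : ℕ) : ℂˣ :=
  Units.mk0 (Complex.exp (2 * Real.pi * Complex.I / p)) (Complex.exp_ne_zero _)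

/-- The coefficient homomorphism `ZMod p → Additive ℂˣ` sending the residue class of
`1` to the primitive `p`-th root of unity `exp(2πi/p)`. -/
noncomputable def rootCoeffHom (p : ℕ) : ZMod p →+ Additive ℂˣ :=
  ZMod.lift p ⟨zmultiplesHom (Additive ℂˣ) (Additive.ofMul (primitiveRootUnit p)), by
    have hpow : primitiveRootUnit p ^ p = 1 := by
      rcases eq_or_ne p 0 with h | h
      · subst h; simp
      · ext
        rw [Units.val_pow_eq_pow_val]
        show Complex.exp (2 * Real.pi * Complex.I / p) ^ p = 1
        rw [← Complex.exp_nat_mul, mul_div_cancel₀ _ (by exact_mod_cast h : (p : ℂ) ≠ 0),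
          Complex.exp_two_pi_mul_I]
    show (p : ℤ) • Additive.ofMul (primitiveRootUnit p) = 0
    rw [← ofMul_zpow]
    simp [hpow]⟩

section
open CategoryTheory Limits

namespace Aux2
variable (p : ℕ)

lemma hprim (hp : p ≠ 0) : IsPrimitiveRoot (primitiveRootUnit p) p :=
  IsPrimitiveRoot.coe_units_iff.mp (Complex.isPrimitiveRoot_exp p hp)

lemma rootCoeffHom_intCast (i : ℤ) :
    rootCoeffHom p ((i : ZMod p)) = Additive.ofMul (primitiveRootUnit p ^ i) := by
  rw [rootCoeffHom, ZMod.lift_coe]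
  show i • Additive.ofMul (primitiveRootUnit p) = _
  rw [← ofMul_zpow]

lemma rootCoeffHom_injective (hp : p ≠ 0) : Function.Injective (rootCoeffHom p) := by
  haveI : NeZero p := ⟨hp⟩
  rw [injective_iff_map_eq_zero]
  intro a ha
  have h1 : a = ((a.val : ℤ) : ZMod p) := by
    simp [ZMod.natCast_val]
  rw [h1, rootCoeffHom_intCast] at ha
  have h2 : primitiveRootUnit p ^ (a.val : ℤ) = 1 := by
    have := congrArg Additive.toMul ha
    simpa using this
  rw [(hprim p hp).zpow_eq_one_iff_dvd] at h2
  have h4 : p ∣ a.val := Int.ofNat_dvd.mp h2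
  have h5 : a.val < p := a.val_lt
  have h6 : a.val = 0 := Nat.eq_zero_of_dvd_of_lt h4 h5
  rw [h1, h6]
  simp

lemma surj_on_torsion (hp : p ≠ 0) (u : Additive ℂˣ) (hu : p • u = 0) :
    ∃ k : ZMod p, rootCoeffHom p k = u := by
  have hc : ((Additive.toMul u : ℂˣ) : ℂ) ^ p = 1 := by
    have := congrArg Additive.toMul hu
    have h2 : (Additive.toMul u : ℂˣ) ^ p = 1 := by simpa using this
    rw [← Units.val_pow_eq_pow_val, h2, Units.val_one]
  haveI : NeZero p := ⟨hp⟩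
  obtain ⟨i, _, hi⟩ := (Complex.isPrimitiveRoot_exp p hp).eq_pow_of_pow_eq_one hc
  have hi' : primitiveRootUnit p ^ i = Additive.toMul u := by
    ext
    rw [Units.val_pow_eq_pow_val]
    exact hi
  refine ⟨((i : ℤ) : ZMod p), ?_⟩
  rw [rootCoeffHom_intCast, zpow_natCast, hi']
  rfl

lemma divisible (k : ℕ) (hk : k ≠ 0) (u : Additive ℂˣ) : ∃ v : Additive ℂˣ, k • v = u := by
  set c : ℂˣ := Additive.toMul u
  refine ⟨Additive.ofMul (Units.mk0 (Complex.exp (Complex.log c / k)) (Complex.exp_ne_zero _)), ?_⟩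
  have hpow : (Units.mk0 (Complex.exp (Complex.log c / k)) (Complex.exp_ne_zero _)) ^ k = c := by
    ext
    rw [Units.val_pow_eq_pow_val]
    show Complex.exp (Complex.log c / k) ^ k = (c : ℂ)
    rw [← Complex.exp_nat_mul, mul_div_cancel₀ _ (by exact_mod_cast hk : (k : ℂ) ≠ 0),
      Complex.exp_log (Units.ne_zero c)]
  rw [← ofMul_pow, hpow]
  rfl

end Aux2

end

/-- The map of inhomogeneous cochain complexes (the complexes computing group cohomology
with trivial coefficients) induced by the coefficient homomorphism
`ZMod p → Additive ℂˣ`, `1 ↦ exp(2πi/p)`. -/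
noncomputable def rootCoeffCochainsMap (p : ℕ) (Q : Type) [Group Q] :
    inhomogeneousCochains (Rep.trivial ℤ Q (ZMod p)) ⟶
      inhomogeneousCochains (Rep.trivial ℤ Q (Additive ℂˣ)) where
  f n := ModuleCat.ofHom ((rootCoeffHom p).toIntLinearMap.compLeft (Fin n → Q))
  comm' i j hij := by
    obtain rfl : j = i + 1 := hij.symm
    ext x : 2
    funext g
    rw [inhomogeneousCochains.d_def, inhomogeneousCochains.d_def]
    simp only [ModuleCat.hom_comp, LinearMap.comp_apply, ModuleCat.hom_ofHom,
      inhomogeneousCochains.d_hom_apply, LinearMap.compLeft_apply, Function.comp_apply,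
      map_add, map_sum, map_zsmul]
    rfl

/-- For a finite group `Q` and a prime `p` such that `H³(Q,ℂˣ)`
(trivial action) is finite of cardinality coprime to `p`, the induced map
`H⁴(Q, ZMod p) → H⁴(Q, ℂˣ)` on fourth group cohomology (induced by the coefficient
homomorphism `ZMod p → ℂˣ`, `1 ↦ exp(2πi/p)`) is injective (Section 4.2 of the paper).
Here `Hⁿ(Q, M)` is Mathlib's `groupCohomology` of the trivial representation, i.e. the
homology of the inhomogeneous cochain complex, and the induced map is the map on
homology of the cochain map `rootCoeffCochainsMap`. -/
theorem fourth_cohomology_coefficient_map_injective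
    (Q : Type) [Group Q] [Finite Q] (p : ℕ) (hp : p.Prime)
    [Finite (groupCohomology (Rep.trivial ℤ Q (Additive ℂˣ)) 3)]
    (hcop : Nat.Coprime
      (Nat.card (groupCohomology (Rep.trivial ℤ Q (Additive ℂˣ)) 3)) p) :
    Function.Injective
      (HomologicalComplex.homologyMap (rootCoeffCochainsMap p Q) 4) := by
  classical
  have hp0 : p ≠ 0 := hp.ne_zero
  set K := inhomogeneousCochains (Rep.trivial ℤ Q (ZMod p)) with hK
  set L := inhomogeneousCochains (Rep.trivial ℤ Q (Additive ℂˣ)) with hL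
  set φ := rootCoeffCochainsMap p Q with hφ
  have hprev4 : (ComplexShape.up ℕ).prev 4 = 3 := (ComplexShape.up ℕ).prev_eq' (by simp)
  have hprev3 : (ComplexShape.up ℕ).prev 3 = 2 := (ComplexShape.up ℕ).prev_eq' (by simp)
  have hnext3 : (ComplexShape.up ℕ).next 3 = 4 := (ComplexShape.up ℕ).next_eq' (by simp)
  -- the key concrete statement
  have key : ∀ x : K.X 4, (∃ y : L.X 3, L.d 3 4 y = φ.f 4 x) → ∃ z : K.X 3, K.d 3 4 z = x := by
    intro x ⟨y, hy⟩
    set n : ℕ := Nat.card (groupCohomology (Rep.trivial ℤ Q (Additive ℂˣ)) 3) with hn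
    have hnpos : n ≠ 0 := Nat.card_ne_zero.2 ⟨⟨0⟩, ‹_›⟩
    -- p • x = 0
    have hpx : (p : ℕ) • x = 0 := by
      funext g
      have hgen : ∀ c : ZMod p, (p : ℕ) • c = 0 := fun c => by
        rw [nsmul_eq_mul, ZMod.natCast_self, zero_mul]
      exact hgen (x g)
    -- p • y is a 3-cocycle
    have hdpy : L.d 3 4 ((p : ℕ) • y) = 0 := by
      rw [map_nsmul, hy, ← map_nsmul (φ.f 4).hom, hpx, map_zero]
    -- use torsion of H³
    have hH3 : ∃ w : L.X 2, L.d 2 3 w = n • ((p : ℕ) • y) := by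
      haveI : Finite ((L.sc 3).homology) :=
        ‹Finite (groupCohomology (Rep.trivial ℤ Q (Additive ℂˣ)) 3)›
      have hg : (L.sc 3).g ((p : ℕ) • y) = 0 := by
        show L.d 3 ((ComplexShape.up ℕ).next 3) ((p : ℕ) • y) = 0
        rw [hnext3]
        exact hdpy
      have h := Aux.card_smul_mem_range (L.sc 3) ((p : ℕ) • y) hg
      have h' : ∃ w : L.X ((ComplexShape.up ℕ).prev 3),
          L.d ((ComplexShape.up ℕ).prev 3) 3 w = n • ((p : ℕ) • y) := h
      exact (Aux.d_range_congr L hprev3 _).1 h'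
    obtain ⟨w, hw⟩ := hH3
    set m : ℕ := n * p with hm
    have hm0 : m ≠ 0 := Nat.mul_ne_zero hnpos hp0
    have hw' : L.d 2 3 w = m • y := by rw [hw, smul_smul]
    -- divide w by m
    obtain ⟨w₀, hw₀⟩ : ∃ w₀ : L.X 2, m • w₀ = w := by
      choose v hv using fun g : Fin 2 → Q => Aux2.divisible m hm0 (w g)
      exact ⟨v, funext fun g => hv g⟩
    set y' : L.X 3 := y - L.d 2 3 w₀ with hy'def
    have htor : (m : ℕ) • y' = 0 := by
      rw [hy'def, nsmul_sub, ← map_nsmul, hw₀, hw', sub_self]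
    have hddw : L.d 3 4 (L.d 2 3 w₀) = 0 := by
      have := CategoryTheory.ConcreteCategory.congr_hom (L.d_comp_d 2 3 4) w₀
      exact this
    have hdy' : L.d 3 4 y' = φ.f 4 x := by
      rw [hy'def, map_sub, hy, hddw, sub_zero]
    -- Bezout
    obtain ⟨a, b, hab⟩ : ∃ a b : ℤ, a * n + b * p = 1 := by
      have hco : IsCoprime (n : ℤ) (p : ℤ) := by
        rw [Int.isCoprime_iff_gcd_eq_one]
        exact_mod_cast hcop
      obtain ⟨a, b, hab⟩ := hco
      exact ⟨a, b, hab⟩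
    set s : ℤ := a * n with hs
    have htor' : ∀ g : Fin 3 → Q, ((m : ℤ)) • y' g = 0 := by
      intro g
      have := congrFun htor g
      rw [natCast_zsmul]
      exact this
    have hptor : ∀ g : Fin 3 → Q, (p : ℕ) • (s • y' g) = 0 := by
      intro g
      have h1 : (p : ℕ) • (s • y' g) = ((p : ℤ)) • (s • y' g) := (natCast_zsmul _ _).symm
      rw [h1, smul_smul]
      have h2 : (p : ℤ) * s = a * (m : ℤ) := by
        rw [hs, hm]
        push_cast
        ring
      rw [h2, mul_smul, htor' g, smul_zero]
    choose z hz using fun g : Fin 3 → Q => Aux2.surj_on_torsion p hp0 (s • y' g) (hptor g)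
    refine ⟨z, ?_⟩
    -- injectivity of φ.f 4
    have hinj : Function.Injective (φ.f 4) := by
      intro u v huv
      funext g
      exact Aux2.rootCoeffHom_injective p hp0 (congrFun huv g)
    apply hinj
    have hcomm : φ.f 4 (K.d 3 4 z) = L.d 3 4 (φ.f 3 z) := by
      have := CategoryTheory.ConcreteCategory.congr_hom (φ.comm 3 4) z
      exact this.symm
    have hfz : φ.f 3 z = s • y' := funext fun g => hz g
    have hsx : s • x = x := by
      funext g
      have hgen : ∀ c : ZMod p, s • c = c := fun c => by
        have hcast : ((s : ℤ) : ZMod p) = 1 := by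
          have h1 : s = 1 - b * p := by linarith [hab]
          rw [h1]
          push_cast
          rw [ZMod.natCast_self]
          ring
        rw [zsmul_eq_mul, hcast, one_mul]
      exact hgen (x g)
    rw [hcomm, hfz, map_zsmul, hdy', ← map_zsmul (φ.f 4).hom, hsx]
  -- glue: reduce homologyMap injectivity to `key`
  refine Aux.homologyMap_injective
    ((HomologicalComplex.shortComplexFunctor (ModuleCat ℤ) (ComplexShape.up ℕ) 4).map φ) ?_
  intro x _ hex
  have hex' : ∃ y : L.X ((ComplexShape.up ℕ).prev 4),
      L.d ((ComplexShape.up ℕ).prev 4) 4 y = φ.f 4 x := hex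
  obtain ⟨z, hz⟩ := key x ((Aux.d_range_congr L hprev4 _).1 hex')
  have : ∃ z' : K.X ((ComplexShape.up ℕ).prev 4),
      K.d ((ComplexShape.up ℕ).prev 4) 4 z' = x := (Aux.d_range_congr K hprev4 _).2 ⟨z, hz⟩
  exact this
end
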